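/- For every real number r with 0 ≤ r ≤ 1 and every real a > 0 with a ≤ r/(1-r), and for every positive integer n, the truncated binomial sum satisfies (1/n) · log(∑_{k=⌈rn⌉}^{n} C(n,k) · a^k) ≤ r·log(a) + H₂(r), where H₂(r) = -r·log r - (1-r)·log(1-r) is the binary entropy (with the convention 0·log 0 = 0). -/

import Mathlib

/-- Truncated binomial sum bound: for `0 ≤ r ≤ 1`, `0 < a ≤ r/(1-r)` and `n ≥ 1`,
`(1/n) log (∑_{k=⌈rn⌉}^n C(n,k) a^k) ≤ r log a + H₂(r)` (natural logs). -/
theorem truncated_binomial_log_bound (r a : ℝ) (n : ℕ)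
    (hr0 : 0 ≤ r) (hr1 : r ≤ 1) (ha : 0 < a) (har : a ≤ r / (1 - r)) (hn : 1 ≤ n) :
    (1 / (n : ℝ)) *
        Real.log (∑ k ∈ Finset.Icc ⌈r * (n : ℝ)⌉₊ n, (n.choose k : ℝ) * a ^ k) ≤
      r * Real.log a + (-(r * Real.log r) - (1 - r) * Real.log (1 - r)) := by
  have hr0' : 0 < r := by
    rcases hr0.lt_or_eq with h | h
    · exact h
    · exfalso; rw [← h] at har; simp at har; linarith
  have hr1' : r < 1 := by
    rcases hr1.lt_or_eq with h | h
    · exact h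
    · exfalso; rw [h] at har; simp at har; linarith
  have h1r : 0 < 1 - r := by linarith
  have hn0 : (0:ℝ) < n := by exact_mod_cast hn
  set t := a * (1 - r) / r with ht
  have ht0 : 0 < t := by positivity
  have ht1 : t ≤ 1 := by
    rw [div_le_one hr0']
    have := (le_div_iff₀ h1r).mp har
    linarith
  have hceil : ⌈r * (n:ℝ)⌉₊ ≤ n := by
    apply Nat.ceil_le.mpr
    nlinarith
  have hSpos : 0 < ∑ k ∈ Finset.Icc ⌈r * (n : ℝ)⌉₊ n, (n.choose k : ℝ) * a ^ k := by
    apply Finset.sum_pos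
    · intro k hk
      have hk' := Finset.mem_Icc.mp hk
      have : 0 < (n.choose k : ℝ) := by exact_mod_cast Nat.choose_pos hk'.2
      positivity
    · exact ⟨n, Finset.mem_Icc.mpr ⟨hceil, le_refl n⟩⟩
  have key : ∀ k ∈ Finset.Icc ⌈r * (n : ℝ)⌉₊ n,
      (n.choose k : ℝ) * a ^ k ≤ t ^ (r * n) * ((n.choose k : ℝ) * (r / (1 - r)) ^ k) := by
    intro k hk
    have hk' := Finset.mem_Icc.mp hk
    have hrk : r * n ≤ (k : ℝ) := le_trans (Nat.le_ceil _) (by exact_mod_cast hk'.1)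
    have ha_eq : a = t * (r / (1 - r)) := by
      rw [ht]; field_simp
    have h1 : a ^ k = t ^ k * (r / (1 - r)) ^ k := by rw [ha_eq, mul_pow]
    have h2 : t ^ k ≤ t ^ (r * n) := by
      rw [← Real.rpow_natCast t k]
      exact Real.rpow_le_rpow_of_exponent_ge ht0 ht1 hrk
    have hnn : (0:ℝ) ≤ (n.choose k : ℝ) * (r / (1 - r)) ^ k := by positivity
    rw [h1]
    calc (n.choose k : ℝ) * (t ^ k * (r / (1 - r)) ^ k)
        = t ^ k * ((n.choose k : ℝ) * (r / (1 - r)) ^ k) := by ring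
      _ ≤ t ^ (r * n) * ((n.choose k : ℝ) * (r / (1 - r)) ^ k) :=
          mul_le_mul_of_nonneg_right h2 hnn
  have hsum1 : (∑ k ∈ Finset.Icc ⌈r * (n : ℝ)⌉₊ n, (n.choose k : ℝ) * a ^ k)
      ≤ t ^ (r * n) * ∑ k ∈ Finset.Icc ⌈r * (n : ℝ)⌉₊ n, (n.choose k : ℝ) * (r / (1 - r)) ^ k := by
    rw [Finset.mul_sum]
    exact Finset.sum_le_sum key
  have hsum2 : (∑ k ∈ Finset.Icc ⌈r * (n : ℝ)⌉₊ n, (n.choose k : ℝ) * (r / (1 - r)) ^ k)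
      ≤ ∑ k ∈ Finset.range (n+1), (n.choose k : ℝ) * (r / (1 - r)) ^ k := by
    apply Finset.sum_le_sum_of_subset_of_nonneg
    · intro k hk
      exact Finset.mem_range.mpr (Nat.lt_succ_of_le (Finset.mem_Icc.mp hk).2)
    · intro k _ _; positivity
  have hbinom : (∑ k ∈ Finset.range (n+1), (n.choose k : ℝ) * (r / (1 - r)) ^ k)
      = (1 / (1 - r)) ^ n := by
    have h := add_pow (r / (1 - r)) 1 n
    simp only [one_pow, mul_one] at h
    rw [show (1:ℝ)/(1-r) = r/(1-r) + 1 by field_simp; ring, h]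
    apply Finset.sum_congr rfl
    intro k _
    ring
  have hS : (∑ k ∈ Finset.Icc ⌈r * (n : ℝ)⌉₊ n, (n.choose k : ℝ) * a ^ k)
      ≤ t ^ (r * n) * (1 / (1 - r)) ^ n := by
    calc _ ≤ _ := hsum1
      _ ≤ t ^ (r * n) * (1 / (1 - r)) ^ n := by
        rw [← hbinom]
        exact mul_le_mul_of_nonneg_left hsum2 (Real.rpow_nonneg ht0.le _)
  have hlog : Real.log (∑ k ∈ Finset.Icc ⌈r * (n : ℝ)⌉₊ n, (n.choose k : ℝ) * a ^ k)
      ≤ (r * n) * Real.log t + n * Real.log (1 / (1 - r)) := by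
    calc Real.log _ ≤ Real.log (t ^ (r*n) * (1/(1-r))^n) := Real.log_le_log hSpos hS
      _ = (r*n) * Real.log t + n * Real.log (1/(1-r)) := by
        rw [Real.log_mul (by positivity) (by positivity), Real.log_rpow ht0, Real.log_pow]
  have hlogt : Real.log t = Real.log a + Real.log (1 - r) - Real.log r := by
    rw [ht, Real.log_div (by positivity) (ne_of_gt hr0'),
      Real.log_mul (ne_of_gt ha) (ne_of_gt h1r)]
  have hlog1r : Real.log (1 / (1 - r)) = - Real.log (1 - r) := by
    rw [Real.log_div one_ne_zero (ne_of_gt h1r), Real.log_one]; ring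
  have heq : (r*n) * Real.log t + n * Real.log (1/(1-r))
      = n * (r * Real.log a + (-(r * Real.log r) - (1 - r) * Real.log (1 - r))) := by
    rw [hlogt, hlog1r]; ring
  rw [heq] at hlog
  calc (1 / (n:ℝ)) * Real.log (∑ k ∈ Finset.Icc ⌈r * (n : ℝ)⌉₊ n, (n.choose k : ℝ) * a ^ k)
      ≤ (1 / (n:ℝ)) * ((n:ℝ) * (r * Real.log a
          + (-(r * Real.log r) - (1 - r) * Real.log (1 - r)))) :=
        mul_le_mul_of_nonneg_left hlog (by positivity)
    _ = r * Real.log a + (-(r * Real.log r) - (1 - r) * Real.log (1 - r)) := by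
        field_simp
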